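/- Let u and v be nodes of the parse tree of R such that u is an ancestor of v. If v ∈ firstextent(p) for some p ∈ first(u), then first(v) ⊆ first(u). -/
import Mathlib


/-- Non-empty regular expressions over alphabet `α`, identified with their parse trees. -/
inductive RE (α : Type) : Type where
  | eps : RE α
  | ch : α → RE α
  | cat : RE α → RE α → RE α
  | alt : RE α → RE α → RE α
  | star : RE α → RE α

/-- Child directions in the parse tree (a `star`-node only has an `L` child). -/
inductive Dir : Type where
  | L : Dir
  | R : Dir
  deriving DecidableEq

/-- A node of the parse tree is identified with the path from the root to it. -/
abbrev TreePath : Type := List Dir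

namespace RE

variable {α : Type}

/-- The subexpression of `R` rooted at the node reached by following path `v`
(`none` if no such node exists). -/
def sub : RE α → TreePath → Option (RE α)
  | r, [] => some r
  | .cat r _, .L :: p => sub r p
  | .cat _ s, .R :: p => sub s p
  | .alt r _, .L :: p => sub r p
  | .alt _ s, .R :: p => sub s p
  | .star r, .L :: p => sub r p
  | _, _ => none

/-- `v` is a node of the parse tree of `R`. -/
def IsNode (R : RE α) (v : TreePath) : Prop := ∃ r, R.sub v = some r

/-- The label of a position (character leaf); `none` if `p` is not a position. -/
def labelOf (R : RE α) (p : TreePath) : Option α :=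
  match R.sub p with
  | some (.ch a) => some a
  | _ => none

/-- `p` is a position of `R`, i.e. a leaf labeled by a character. -/
def IsPos (R : RE α) (p : TreePath) : Prop := ∃ a, R.labelOf p = some a

/-- `v` is a `⊙`-node (concatenation node). -/
def IsCatNode (R : RE α) (v : TreePath) : Prop := ∃ r s, R.sub v = some (.cat r s)

/-- `v` is a `∗`-node (Kleene-star node). -/
def IsStarNode (R : RE α) (v : TreePath) : Prop := ∃ r, R.sub v = some (.star r)

/-- `PosSeq r w` holds when `w` is a sequence of (paths to) positions of `r`
whose labels spell some string of `L(r)`. -/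
inductive PosSeq : RE α → List TreePath → Prop where
  | eps : PosSeq .eps []
  | ch (a : α) : PosSeq (.ch a) [[]]
  | cat {r s : RE α} {u v : List TreePath} : PosSeq r u → PosSeq s v →
      PosSeq (.cat r s) (u.map (Dir.L :: ·) ++ v.map (Dir.R :: ·))
  | altL {r s : RE α} {u : List TreePath} : PosSeq r u → PosSeq (.alt r s) (u.map (Dir.L :: ·))
  | altR {r s : RE α} {v : List TreePath} : PosSeq s v → PosSeq (.alt r s) (v.map (Dir.R :: ·))
  | starNil {r : RE α} : PosSeq (.star r) []
  | starCons {r : RE α} {u w : List TreePath} : PosSeq r u → PosSeq (.star r) w →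
      PosSeq (.star r) (u.map (Dir.L :: ·) ++ w)

/-- `first(v)`: the positions (as paths in `R`) that occur first in a position
sequence of the subexpression rooted at `v`. -/
def firstSet (R : RE α) (v : TreePath) : Set TreePath :=
  {p | ∃ r, R.sub v = some r ∧ ∃ p' w, PosSeq r (p' :: w) ∧ p = v ++ p'}

/-- `last(v)`: the positions (as paths in `R`) that occur last in a position
sequence of the subexpression rooted at `v`. -/
def lastSet (R : RE α) (v : TreePath) : Set TreePath :=
  {p | ∃ r, R.sub v = some r ∧ ∃ w p', PosSeq r (w ++ [p']) ∧ p = v ++ p'}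

/-- `follow(R,p)`: the positions that can follow `p` in a position sequence of `R`. -/
def followSet (R : RE α) (p : TreePath) : Set TreePath :=
  {q | ∃ w₁ w₂, PosSeq R (w₁ ++ p :: q :: w₂)}

/-- `firstextent(p) = {v : p ∈ first(v)}`. -/
def firstExtent (R : RE α) (p : TreePath) : Set TreePath := {v | p ∈ R.firstSet v}

/-- `lastextent(p) = {v : p ∈ last(v)}`. -/
def lastExtent (R : RE α) (p : TreePath) : Set TreePath := {v | p ∈ R.lastSet v}

/-- `firstextent(P)` for a set of positions `P`. -/
def firstExtentSet (R : RE α) (P : Set TreePath) : Set TreePath := ⋃ p ∈ P, R.firstExtent p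

/-- `lastextent(P)` for a set of positions `P`. -/
def lastExtentSet (R : RE α) (P : Set TreePath) : Set TreePath := ⋃ p ∈ P, R.lastExtent p

end RE

/-- Lowest common ancestor of two nodes = longest common prefix of the paths. -/
def lcaP : TreePath → TreePath → TreePath
  | a :: p, b :: q => if a = b then a :: lcaP p q else []
  | _, _ => []

namespace RE

variable {α : Type}

/-- `u = parent*(v)`: `u` is the lowest ancestor of `v` (possibly `v` itself)
that is a `∗`-node. -/
def IsLowestStarAnc (R : RE α) (v u : TreePath) : Prop :=
  u <+: v ∧ R.IsStarNode u ∧ ∀ w, w <+: v → R.IsStarNode w → w <+: u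

/-- `δ(p,α)`: the `α`-transitions of the position automaton out of position `p`. -/
def delta (R : RE α) (p : TreePath) (a : α) : Set TreePath :=
  {q | R.labelOf q = some a ∧ q ∈ R.followSet p}

/-- `δ(P,α) = ∪_{p ∈ P} δ(p,α)`. -/
def deltaSet (R : RE α) (P : Set TreePath) (a : α) : Set TreePath := ⋃ p ∈ P, R.delta p a

/-- Internal `⊙`-transition: `δ⊙(v,α) = {q ∈ Pos_α : right(v) ∈ firstextent(q)}`. -/
def deltaOdot (R : RE α) (v : TreePath) (a : α) : Set TreePath :=
  {q | R.labelOf q = some a ∧ q ∈ R.firstSet (v ++ [Dir.R])}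

/-- Internal `∗`-transition: `δ∗(v,α) = {q ∈ Pos_α : parent*(v) ∈ firstextent(q)}`. -/
def deltaStar (R : RE α) (v : TreePath) (a : α) : Set TreePath :=
  {q | R.labelOf q = some a ∧ ∃ u, R.IsLowestStarAnc v u ∧ q ∈ R.firstSet u}

/-- `N⊙(P,α)`: the `⊙`-transition nodes. -/
def NOdot (R : RE α) (P : Set TreePath) (a : α) : Set TreePath :=
  {v | R.IsCatNode v ∧ (v ++ [Dir.L]) ∈ R.lastExtentSet P ∧
    (∃ q, R.labelOf q = some a ∧ q ∈ R.firstSet (v ++ [Dir.R]))}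

/-- `N∗(P,α)`: the `∗`-transition nodes. -/
def NStar (R : RE α) (P : Set TreePath) (a : α) : Set TreePath :=
  {u | R.IsStarNode u ∧
    (∃ p ∈ P, ∃ q, R.labelOf q = some a ∧ R.IsLowestStarAnc (lcaP p q) u) ∧
    (∃ p ∈ P, p ∈ R.lastSet u) ∧ (∃ q, R.labelOf q = some a ∧ q ∈ R.firstSet u)}

/-- `u` `∗`-dominates `v`: `u` is a proper ancestor of `v` and `first(v) ⊆ first(u)`. -/
def StarDom (R : RE α) (u v : TreePath) : Prop :=
  u <+: v ∧ u ≠ v ∧ R.firstSet v ⊆ R.firstSet u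

/-- `u` `⊙`-dominates `v`: `u` is a proper ancestor of `v` and
`first(right(v)) ⊆ first(right(u))`. -/
def OdotDom (R : RE α) (u v : TreePath) : Prop :=
  u <+: v ∧ u ≠ v ∧ R.firstSet (v ++ [Dir.R]) ⊆ R.firstSet (u ++ [Dir.R])

/-- `Ñ⊙(P,α)`: the relevant `⊙`-transition nodes. -/
def RelNOdot (R : RE α) (P : Set TreePath) (a : α) : Set TreePath :=
  {v ∈ R.NOdot P a | ∀ u ∈ R.NOdot P a, ¬ R.OdotDom u v}

/-- `Ñ∗(P,α)`: the relevant `∗`-transition nodes. -/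
def RelNStar (R : RE α) (P : Set TreePath) (a : α) : Set TreePath :=
  {v ∈ R.NStar P a | ∀ u ∈ R.NStar P a, ¬ R.StarDom u v}

/-- `v` is a node of the transition tree `T` of `P`: an ancestor of some position of `P`. -/
def InT (R : RE α) (P : Set TreePath) (v : TreePath) : Prop := ∃ p ∈ P, v <+: p

/-- `v` is a branching node of the transition tree of `P`: both children are in `T`. -/
def Branching (R : RE α) (P : Set TreePath) (v : TreePath) : Prop :=
  R.InT P (v ++ [Dir.L]) ∧ R.InT P (v ++ [Dir.R])

/-- `v` is a leaf of the transition tree of `P`. -/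
def LeafT (R : RE α) (P : Set TreePath) (v : TreePath) : Prop :=
  R.InT P v ∧ ∀ d : Dir, ¬ R.InT P (v ++ [d])

/-- `v` is a `⊙`-live node: a `⊙`-node with `left(v) ∈ lastextent(P)`. -/
def OdotLive (R : RE α) (P : Set TreePath) (v : TreePath) : Prop :=
  R.IsCatNode v ∧ (v ++ [Dir.L]) ∈ R.lastExtentSet P

/-- `v` is weakly `⊙`-dominated by `u`: `u` is `⊙`-live, a proper ancestor of `v`,
and `first(v) ⊆ first(right(u))`. -/
def WeakOdotDom (R : RE α) (P : Set TreePath) (u v : TreePath) : Prop :=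
  R.OdotLive P u ∧ u <+: v ∧ u ≠ v ∧ R.firstSet v ⊆ R.firstSet (u ++ [Dir.R])

/-- The pair `(t, b)` delimits a segment of the transition tree of `P`: a path from a
leaf or branching node `b` up to the nearest branching node `t` strictly above it
(or to the root if there is none). -/
def IsSegment (R : RE α) (P : Set TreePath) (t b : TreePath) : Prop :=
  R.InT P b ∧ t <+: b ∧ t ≠ b ∧
  (R.LeafT P b ∨ R.Branching P b) ∧
  (R.Branching P t ∨ t = []) ∧
  (∀ w, t <+: w → w <+: b → w ≠ t → w ≠ b → ¬ R.Branching P w)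

/-- The language `L(R)`. -/
def lang : RE α → Set (List α)
  | .eps => {[]}
  | .ch a => {[a]}
  | .cat r s => {w | ∃ u ∈ lang r, ∃ v ∈ lang s, w = u ++ v}
  | .alt r s => lang r ∪ lang s
  | .star r => {w | ∃ l : List (List α), (∀ u ∈ l, u ∈ lang r) ∧ w = l.flatten}

/-- The position automaton (Glushkov automaton) of `R`: states are the positions of `R`
plus a start state `none`; for `q ∈ first(R)` there is a transition `(p₀, q, label(q))`,
and for `q ∈ follow(R,p)` a transition `(p, q, label(q))`; accepting states are
`last(R)`, together with `p₀` if `ε ∈ L(R)`. -/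
def posNFA (R : RE α) : NFA α (Option TreePath) where
  step := fun s a =>
    {t | ∃ q : TreePath, t = some q ∧ R.labelOf q = some a ∧
      ((s = none ∧ q ∈ R.firstSet []) ∨ (∃ p, s = some p ∧ q ∈ R.followSet p))}
  start := {none}
  accept := {t | (∃ p, t = some p ∧ p ∈ R.lastSet []) ∨ (t = none ∧ [] ∈ R.lang)}

end RE

namespace RE

variable {α : Type}

lemma sub_append (u : TreePath) : ∀ (R ru : RE α) (t : TreePath),
    R.sub u = some ru → R.sub (u ++ t) = ru.sub t := by
  induction u with
  | nil => intro R ru t h; simp [sub] at h; subst h; rfl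
  | cons d u ih =>
    intro R ru t h
    cases R with
    | eps => simp [sub] at h
    | ch a => simp [sub] at h
    | cat r s => cases d <;> exact ih _ _ _ h
    | alt r s => cases d <;> exact ih _ _ _ h
    | star r =>
      cases d with
      | L => exact ih _ _ _ h
      | R => simp [sub] at h

/-- `p` is a first position of `r` (at the root). -/
def F (r : RE α) (p : TreePath) : Prop := ∃ w, PosSeq r (p :: w)

lemma cat_first_L {r1 r2 : RE α} {x : TreePath} {w : List TreePath}
    (h : PosSeq (.cat r1 r2) ((Dir.L :: x) :: w)) : F r1 x := by
  generalize hl : (Dir.L :: x) :: w = l at h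
  cases h with
  | cat hu hv =>
    rename_i u v
    cases u with
    | nil =>
      cases v with
      | nil => simp at hl
      | cons v0 v' => simp at hl
    | cons u0 u' =>
      simp only [List.map_cons, List.cons_append, List.cons.injEq, List.cons.injEq] at hl
      obtain ⟨⟨_, hx⟩, _⟩ := hl
      exact ⟨u', by rwa [← hx] at hu⟩

lemma cat_first_R {r1 r2 : RE α} {x : TreePath} {w : List TreePath}
    (h : PosSeq (.cat r1 r2) ((Dir.R :: x) :: w)) : PosSeq r1 [] ∧ F r2 x := by
  generalize hl : (Dir.R :: x) :: w = l at h
  cases h with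
  | cat hu hv =>
    rename_i u v
    cases u with
    | nil =>
      cases v with
      | nil => simp at hl
      | cons v0 v' =>
        simp only [List.map_nil, List.nil_append, List.map_cons, List.cons.injEq] at hl
        obtain ⟨⟨_, hx⟩, _⟩ := hl
        exact ⟨hu, v', by rwa [← hx] at hv⟩
    | cons u0 u' => simp at hl

lemma cat_right {r1 r2 : RE α} {l : List TreePath}
    (h : PosSeq (.cat r1 r2) l) : ∃ v2, PosSeq r2 v2 := by
  cases h with
  | cat hu hv => exact ⟨_, hv⟩

lemma alt_first_L {r1 r2 : RE α} {x : TreePath} {w : List TreePath}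
    (h : PosSeq (.alt r1 r2) ((Dir.L :: x) :: w)) : F r1 x := by
  generalize hl : (Dir.L :: x) :: w = l at h
  cases h with
  | altL hu =>
    rename_i u
    cases u with
    | nil => simp at hl
    | cons u0 u' =>
      simp only [List.map_cons, List.cons.injEq] at hl
      obtain ⟨⟨_, hx⟩, _⟩ := hl
      exact ⟨u', by rwa [← hx] at hu⟩
  | altR hv =>
    rename_i v
    cases v with
    | nil => simp at hl
    | cons v0 v' => simp at hl

lemma alt_first_R {r1 r2 : RE α} {x : TreePath} {w : List TreePath}
    (h : PosSeq (.alt r1 r2) ((Dir.R :: x) :: w)) : F r2 x := by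
  generalize hl : (Dir.R :: x) :: w = l at h
  cases h with
  | altR hv =>
    rename_i v
    cases v with
    | nil => simp at hl
    | cons v0 v' =>
      simp only [List.map_cons, List.cons.injEq] at hl
      obtain ⟨⟨_, hx⟩, _⟩ := hl
      exact ⟨v', by rwa [← hx] at hv⟩
  | altL hu =>
    rename_i u
    cases u with
    | nil => simp at hl
    | cons u0 u' => simp at hl

lemma star_first {r : RE α} {x : TreePath} :
    ∀ {w : List TreePath}, PosSeq (.star r) ((Dir.L :: x) :: w) → F r x := by
  intro w h
  generalize hr : RE.star r = R at h
  generalize hl : (Dir.L :: x) :: w = l at h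
  induction h generalizing w with
  | starNil => simp at hl
  | starCons hu hw ihu ihw =>
    rename_i r2 u2 w2
    cases hr
    cases u2 with
    | nil =>
      exact ihw rfl hl
    | cons u0 u' =>
      injection hl with h1 h2
      injection h1 with _ h3
      exact ⟨u', by rw [h3]; exact hu⟩
  | eps => simp at hr
  | ch => simp at hr
  | cat _ _ => simp at hr
  | altL _ => simp at hr
  | altR _ => simp at hr

lemma core : ∀ (v : TreePath) (r s : RE α), r.sub v = some s →
    ∀ p, F s p → F r (v ++ p) → ∀ q, F s q → F r (v ++ q) := by
  intro v
  induction v with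
  | nil =>
    intro r s hs p _ _ q hq
    simp [sub] at hs; subst hs; simpa using hq
  | cons d v ih =>
    intro r s hs p hp hvp q hq
    cases r with
    | eps => simp [sub] at hs
    | ch a => simp [sub] at hs
    | cat r1 r2 =>
      cases d with
      | L =>
        obtain ⟨w, hw⟩ := hvp
        have h1 : F r1 (v ++ p) := cat_first_L hw
        obtain ⟨t, ht⟩ := ih r1 s hs p hp h1 q hq
        -- need some PosSeq r2
        obtain ⟨v2, hv2⟩ := cat_right hw
        refine ⟨(t.map (Dir.L :: ·)) ++ v2.map (Dir.R :: ·), ?_⟩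
        have := PosSeq.cat ht hv2
        simpa using this
      | R =>
        obtain ⟨w, hw⟩ := hvp
        obtain ⟨h1, h2⟩ := cat_first_R hw
        obtain ⟨t, ht⟩ := ih r2 s hs p hp h2 q hq
        refine ⟨t.map (Dir.R :: ·), ?_⟩
        have := PosSeq.cat h1 ht
        simpa using this
    | alt r1 r2 =>
      cases d with
      | L =>
        obtain ⟨w, hw⟩ := hvp
        have h1 : F r1 (v ++ p) := alt_first_L hw
        obtain ⟨t, ht⟩ := ih r1 s hs p hp h1 q hq
        refine ⟨t.map (Dir.L :: ·), ?_⟩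
        have := PosSeq.altL (s := r2) ht
        simpa using this
      | R =>
        obtain ⟨w, hw⟩ := hvp
        have h1 : F r2 (v ++ p) := alt_first_R hw
        obtain ⟨t, ht⟩ := ih r2 s hs p hp h1 q hq
        refine ⟨t.map (Dir.R :: ·), ?_⟩
        have := PosSeq.altR (r := r1) ht
        simpa using this
    | star r =>
      cases d with
      | L =>
        obtain ⟨w, hw⟩ := hvp
        have h1 : F r (v ++ p) := star_first hw
        obtain ⟨t, ht⟩ := ih r s hs p hp h1 q hq
        refine ⟨t.map (Dir.L :: ·), ?_⟩
        have := PosSeq.starCons ht (PosSeq.starNil (r := r))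
        simpa using this
      | R => simp [sub] at hs

end RE

/-- If `u` is an ancestor of `v` and `v ∈ firstextent(p)` for some `p ∈ first(u)`,
then `first(v) ⊆ first(u)`. -/
theorem first_subset_of_firstExtent {α : Type} (R : RE α) (u v : TreePath)
    (hanc : u <+: v) (p : TreePath) (hp : p ∈ R.firstSet u)
    (hv : v ∈ R.firstExtent p) :
    R.firstSet v ⊆ R.firstSet u := by
  obtain ⟨ru, hru, p', w, hpw, hpdef⟩ := hp
  obtain ⟨v', rfl⟩ := hanc
  have hsubv : R.sub (u ++ v') = ru.sub v' := RE.sub_append u R ru v' hru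
  obtain ⟨rv, hrv, p'', w', hpw', hpdef'⟩ := hv
  rw [hsubv] at hrv
  have hpp : p' = v' ++ p'' := by
    have : u ++ p' = u ++ (v' ++ p'') := by
      rw [← List.append_assoc]; rw [← hpdef, ← hpdef']
    exact List.append_cancel_left this
  have hFp : RE.F ru (v' ++ p'') := ⟨w, by rwa [hpp] at hpw⟩
  intro x hx
  obtain ⟨rv2, hrv2, q, wq, hq, hxdef⟩ := hx
  rw [hsubv, hrv] at hrv2
  injection hrv2 with hrv2'
  subst hrv2'
  have hFq : RE.F ru (v' ++ q) :=
    RE.core v' ru rv hrv p'' ⟨w', hpw'⟩ hFp q ⟨wq, hq⟩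
  obtain ⟨t, ht⟩ := hFq
  exact ⟨ru, hru, v' ++ q, t, ht, by simp [hxdef]⟩
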